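/- If X ∈ gl_N(ℂ) satisfies GX = XG, then for every k = 1,…,L one has [Σ_{ℓ=1}^L X^{(ℓ)}, H_k^{(n)}] = 0; i.e. the twisted Gaudin model has the fixed-point subalgebra {X ∈ gl_N(ℂ) : G^{−1}XG = X} (isomorphic to gl_{N_0} ⊕ ⋯ ⊕ gl_{N_{n−1}} when G is diagonalizable with eigenvalue multiplicities N_0,…,N_{n−1}) as a symmetry algebra. -/

import Mathlib

open Matrix
open scoped TensorProduct

noncomputable section

/-- `τ = e^{2πi/n}`. -/
def tau (n : ℕ) : ℂ := Complex.exp (2 * Real.pi * Complex.I / n)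

variable {N L : ℕ}
variable {V : Fin L → Type} [∀ ℓ, AddCommGroup (V ℓ)] [∀ ℓ, Module ℂ (V ℓ)]
variable (ρ : ∀ ℓ, Matrix (Fin N) (Fin N) ℂ →ₗ[ℂ] Module.End ℂ (V ℓ))

/-- The operator `X^{(ℓ)}` on `W = ⨂_ℓ V ℓ`, acting as `ρ ℓ X` in the `ℓ`-th tensor
factor and as the identity elsewhere. -/
def siteOp (ℓ : Fin L) (X : Matrix (Fin N) (Fin N) ℂ) :
    Module.End ℂ (⨂[ℂ] i, V i) :=
  PiTensorProduct.map (Function.update (fun i => (LinearMap.id : V i →ₗ[ℂ] V i)) ℓ (ρ ℓ X))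

/-- The matrix `𝐏_{aℓ}` over `End W`, whose `(i,j)` entry is `(E_{ji})^{(ℓ)}`. -/
def Pm (ℓ : Fin L) : Matrix (Fin N) (Fin N) (Module.End ℂ (⨂[ℂ] i, V i)) :=
  Matrix.of fun i j => siteOp ρ ℓ (Matrix.single j i 1)

/-- `T_a(u) = Σ_ℓ (u − z_ℓ)⁻¹ 𝐏_{aℓ}`. -/
def Tm (z : Fin L → ℂ) (u : ℂ) : Matrix (Fin N) (Fin N) (Module.End ℂ (⨂[ℂ] i, V i)) :=
  ∑ ℓ : Fin L, (u - z ℓ)⁻¹ • Pm ρ ℓ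

/-- A scalar `N×N` matrix viewed as a matrix over `End W`. -/
def emb (V : Fin L → Type) [∀ ℓ, AddCommGroup (V ℓ)] [∀ ℓ, Module ℂ (V ℓ)]
    (M : Matrix (Fin N) (Fin N) ℂ) :
    Matrix (Fin N) (Fin N) (Module.End ℂ (⨂[ℂ] i, V i)) :=
  M.map (algebraMap ℂ (Module.End ℂ (⨂[ℂ] i, V i)))

/-- `B_a(u) = Σ_{k=0}^{n−1} τ^k G^k T_a(τ^k u) G^{−k}`. -/
def Bm (z : Fin L → ℂ) (n : ℕ) (G : Matrix (Fin N) (Fin N) ℂ) (u : ℂ) :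
    Matrix (Fin N) (Fin N) (Module.End ℂ (⨂[ℂ] i, V i)) :=
  ∑ k ∈ Finset.range n,
    tau n ^ k • (emb V (G ^ k) * Tm ρ z (tau n ^ k * u) * emb V (G⁻¹ ^ k))

/-- `M_a = M ⊗ 1` as an `N²×N²` matrix. -/
def aM {A : Type} [Zero A] (M : Matrix (Fin N) (Fin N) A) :
    Matrix (Fin N × Fin N) (Fin N × Fin N) A :=
  Matrix.of fun p q => if p.2 = q.2 then M p.1 q.1 else 0

/-- `M_b = 1 ⊗ M` as an `N²×N²` matrix. -/
def bM {A : Type} [Zero A] (M : Matrix (Fin N) (Fin N) A) :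
    Matrix (Fin N × Fin N) (Fin N × Fin N) A :=
  Matrix.of fun p q => if p.1 = q.1 then M p.2 q.2 else 0

/-- The permutation matrix `P_{ab} = Σ_{ij} E_{ij} ⊗ E_{ji}`. -/
def PP (N : ℕ) (A : Type) [Zero A] [One A] :
    Matrix (Fin N × Fin N) (Fin N × Fin N) A :=
  Matrix.of fun p q => if p.1 = q.2 ∧ p.2 = q.1 then 1 else 0

/-- The inner-twisted Gaudin Hamiltonian
`H_k^{(n)} = Σ_{j≠k} Σ_{p=0}^{n−1} (z_k − τ^p z_j)⁻¹ tr_a(𝐏_{ak} G^{−p} 𝐏_{aj} G^{p})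
  + Σ_{p=1}^{n−1} (2z_k)⁻¹ tr_a(𝐏_{ak} G^{−p} 𝐏_{ak} G^{p})`. -/
def Hin (z : Fin L → ℂ) (n : ℕ) (G : Matrix (Fin N) (Fin N) ℂ) (k : Fin L) :
    Module.End ℂ (⨂[ℂ] i, V i) :=
  (∑ j ∈ Finset.univ.filter (fun j => j ≠ k), ∑ p ∈ Finset.range n,
      (z k - tau n ^ p * z j)⁻¹ •
        (Pm ρ k * emb V (G⁻¹ ^ p) * Pm ρ j * emb V (G ^ p)).trace)
    + ∑ p ∈ Finset.Ico 1 n,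
        (2 * z k)⁻¹ • (Pm ρ k * emb V (G⁻¹ ^ p) * Pm ρ k * emb V (G ^ p)).trace


section AuxTwistedGaudin

variable {N L : ℕ}
variable {V : Fin L → Type} [∀ ℓ, AddCommGroup (V ℓ)] [∀ ℓ, Module ℂ (V ℓ)]
variable (ρ : ∀ ℓ, Matrix (Fin N) (Fin N) ℂ →ₗ[ℂ] Module.End ℂ (V ℓ))

lemma pimap_sub (ℓ : Fin L) (u v : V ℓ →ₗ[ℂ] V ℓ) :
    PiTensorProduct.map (Function.update (fun i => (LinearMap.id : V i →ₗ[ℂ] V i)) ℓ (u - v)) =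
      PiTensorProduct.map (Function.update (fun i => (LinearMap.id : V i →ₗ[ℂ] V i)) ℓ u) -
        PiTensorProduct.map (Function.update (fun i => (LinearMap.id : V i →ₗ[ℂ] V i)) ℓ v) := by
  rw [sub_eq_add_neg, ← neg_one_smul ℂ v, PiTensorProduct.map_update_add,
    PiTensorProduct.map_update_smul]
  module

lemma siteOp_add (ℓ : Fin L) (A B : Matrix (Fin N) (Fin N) ℂ) :
    siteOp ρ ℓ (A + B) = siteOp ρ ℓ A + siteOp ρ ℓ B := by
  unfold siteOp
  rw [map_add, PiTensorProduct.map_update_add]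

lemma siteOp_smul (ℓ : Fin L) (c : ℂ) (A : Matrix (Fin N) (Fin N) ℂ) :
    siteOp ρ ℓ (c • A) = c • siteOp ρ ℓ A := by
  unfold siteOp
  rw [_root_.map_smul, PiTensorProduct.map_update_smul]

/-- `siteOp` as a linear map in the matrix argument. -/
def siteOpL (ℓ : Fin L) :
    Matrix (Fin N) (Fin N) ℂ →ₗ[ℂ] Module.End ℂ (⨂[ℂ] i, V i) where
  toFun := siteOp ρ ℓ
  map_add' := siteOp_add ρ ℓ
  map_smul' := siteOp_smul ρ ℓ

lemma siteOp_sub' (ℓ : Fin L) (A B : Matrix (Fin N) (Fin N) ℂ) :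
    siteOp ρ ℓ (A - B) = siteOp ρ ℓ A - siteOp ρ ℓ B := by
  unfold siteOp
  rw [map_sub, pimap_sub]

lemma siteOp_mul_same (ℓ : Fin L) (A B : Matrix (Fin N) (Fin N) ℂ) :
    siteOp ρ ℓ A * siteOp ρ ℓ B =
      PiTensorProduct.map
        (Function.update (fun i => (LinearMap.id : V i →ₗ[ℂ] V i)) ℓ (ρ ℓ A ∘ₗ ρ ℓ B)) := by
  unfold siteOp
  rw [Module.End.mul_eq_comp, ← PiTensorProduct.map_comp]
  congr 1
  funext i
  by_cases h : i = ℓ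
  · subst h; simp
  · simp [Function.update_of_ne h]

lemma siteOp_comm_ne {ℓ m : Fin L} (h : m ≠ ℓ) (A B : Matrix (Fin N) (Fin N) ℂ) :
    siteOp ρ m A * siteOp ρ ℓ B = siteOp ρ ℓ B * siteOp ρ m A := by
  unfold siteOp
  rw [Module.End.mul_eq_comp, Module.End.mul_eq_comp, ← PiTensorProduct.map_comp,
    ← PiTensorProduct.map_comp]
  congr 1
  funext i
  by_cases hm : i = m
  · subst hm; simp [Function.update_of_ne h]
  · by_cases hl : i = ℓ
    · subst hl; simp [Function.update_of_ne hm, Function.update_of_ne (Ne.symm h)]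
    · simp [Function.update_of_ne hm, Function.update_of_ne hl]

lemma siteOp_bracket
    (hρ : ∀ ℓ (X Y : Matrix (Fin N) (Fin N) ℂ),
      ρ ℓ (X * Y - Y * X) = ρ ℓ X * ρ ℓ Y - ρ ℓ Y * ρ ℓ X)
    (ℓ : Fin L) (A B : Matrix (Fin N) (Fin N) ℂ) :
    siteOp ρ ℓ A * siteOp ρ ℓ B - siteOp ρ ℓ B * siteOp ρ ℓ A =
      siteOp ρ ℓ (A * B - B * A) := by
  rw [siteOp_mul_same, siteOp_mul_same, ← pimap_sub]
  unfold siteOp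
  rw [show (ρ ℓ) A ∘ₗ (ρ ℓ) B - (ρ ℓ) B ∘ₗ (ρ ℓ) A = (ρ ℓ) (A * B - B * A) from
    (hρ ℓ A B).symm]

lemma total_comm
    (hρ : ∀ ℓ (X Y : Matrix (Fin N) (Fin N) ℂ),
      ρ ℓ (X * Y - Y * X) = ρ ℓ X * ρ ℓ Y - ρ ℓ Y * ρ ℓ X)
    (X : Matrix (Fin N) (Fin N) ℂ) (ℓ : Fin L) (E : Matrix (Fin N) (Fin N) ℂ) :
    (∑ m : Fin L, siteOp ρ m X) * siteOp ρ ℓ E -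
        siteOp ρ ℓ E * (∑ m : Fin L, siteOp ρ m X) =
      siteOp ρ ℓ (X * E - E * X) := by
  rw [Finset.sum_mul, Finset.mul_sum, ← Finset.sum_sub_distrib,
    Finset.sum_eq_single ℓ]
  · exact siteOp_bracket ρ hρ ℓ X E
  · intro m _ hm
    rw [siteOp_comm_ne ρ hm, sub_self]
  · intro h; exact absurd (Finset.mem_univ ℓ) h

lemma mul_std (Xm : Matrix (Fin N) (Fin N) ℂ) (j i : Fin N) :
    Xm * Matrix.single j i (1:ℂ) = ∑ r : Fin N, Xm r j • Matrix.single r i 1 := by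
  ext a b
  simp [Matrix.mul_apply, Matrix.single, Matrix.sum_apply, ite_and]

lemma std_mul (Xm : Matrix (Fin N) (Fin N) ℂ) (j i : Fin N) :
    Matrix.single j i (1:ℂ) * Xm = ∑ s : Fin N, Xm i s • Matrix.single j s 1 := by
  ext a b
  simp [Matrix.mul_apply, Matrix.single, Matrix.sum_apply, ite_and]

lemma conj_push {R : Type*} [Ring R] (d e p a q b : R)
    (hp : d * p = p * d + (p * e - e * p)) (hq : d * q = q * d + (q * e - e * q))
    (ha : d * a = a * d) (hb : d * b = b * d)
    (hea : e * a = a * e) (heb : e * b = b * e) :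
    d * (p * a * q * b) - (p * a * q * b) * d =
      (p * a * q * b) * e - e * (p * a * q * b) := by
  have h1 : d * (p * a * q * b) = (d * p) * (a * q * b) := by noncomm_ring
  rw [hp] at h1
  have h2 : (p * d + (p * e - e * p)) * (a * q * b)
      = p * (d * a) * (q * b) + p * e * a * q * b - e * (p * a * q * b) := by noncomm_ring
  rw [ha] at h2
  have h3 : p * (a * d) * (q * b) + p * e * a * q * b - e * (p * a * q * b)
      = p * a * (d * q) * b + p * (e * a) * (q * b) - e * (p * a * q * b) := by noncomm_ring
  rw [hq, hea] at h3
  have h4 : p * a * (q * d + (q * e - e * q)) * b + p * (a * e) * (q * b) - e * (p * a * q * b)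
      = p * a * q * (d * b) + p * a * q * (e * b) - e * (p * a * q * b) := by noncomm_ring
  rw [hb, heb] at h4
  have h5 : p * a * q * (b * d) + p * a * q * (b * e) - e * (p * a * q * b)
      = (p * a * q * b) * d + ((p * a * q * b) * e - e * (p * a * q * b)) := by noncomm_ring
  rw [h1, h2, h3, h4, h5]
  noncomm_ring

lemma emb_mul (A B : Matrix (Fin N) (Fin N) ℂ) :
    emb V (A * B) = emb V A * emb V B :=
  _root_.map_mul ((algebraMap ℂ (Module.End ℂ (⨂[ℂ] i, V i))).mapMatrix) A B

lemma Sd_comm_emb (S : Module.End ℂ (⨂[ℂ] i, V i)) (A : Matrix (Fin N) (Fin N) ℂ) :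
    Matrix.diagonal (fun _ : Fin N => S) * emb V A =
      emb V A * Matrix.diagonal (fun _ : Fin N => S) := by
  apply Matrix.ext; intro i j
  rw [Matrix.diagonal_mul, Matrix.mul_diagonal]
  simp only [emb, Matrix.map_apply]
  exact (Algebra.commutes (A i j) S).symm

lemma siteOp_sum_smul (ℓ : Fin L) {α : Type*} (s : Finset α) (c : α → ℂ)
    (E : α → Matrix (Fin N) (Fin N) ℂ) :
    siteOp ρ ℓ (∑ r ∈ s, c r • E r) = ∑ r ∈ s, c r • siteOp ρ ℓ (E r) := by
  rw [show siteOp ρ ℓ (∑ r ∈ s, c r • E r) = siteOpL ρ ℓ (∑ r ∈ s, c r • E r) from rfl,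
    map_sum]
  exact Finset.sum_congr rfl fun r _ => by
    rw [show (siteOpL ρ ℓ) (c r • E r) = siteOp ρ ℓ (c r • E r) from rfl, siteOp_smul]

lemma Sd_comm_Pm
    (hρ : ∀ ℓ (X Y : Matrix (Fin N) (Fin N) ℂ),
      ρ ℓ (X * Y - Y * X) = ρ ℓ X * ρ ℓ Y - ρ ℓ Y * ρ ℓ X)
    (X : Matrix (Fin N) (Fin N) ℂ) (ℓ : Fin L) :
    Matrix.diagonal (fun _ : Fin N => ∑ m : Fin L, siteOp ρ m X) * Pm ρ ℓ
        - Pm ρ ℓ * Matrix.diagonal (fun _ : Fin N => ∑ m : Fin L, siteOp ρ m X)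
      = Pm ρ ℓ * emb V X - emb V X * Pm ρ ℓ := by
  apply Matrix.ext; intro i j
  rw [Matrix.sub_apply, Matrix.sub_apply, Matrix.diagonal_mul, Matrix.mul_diagonal,
    Matrix.mul_apply, Matrix.mul_apply]
  simp only [Pm, emb, Matrix.of_apply, Matrix.map_apply]
  rw [total_comm ρ hρ, siteOp_sub']
  have h1 : siteOp ρ ℓ (X * Matrix.single j i (1:ℂ))
      = ∑ r : Fin N, siteOp ρ ℓ (Matrix.single r i 1) * algebraMap ℂ _ (X r j) := by
    rw [mul_std, siteOp_sum_smul]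
    refine Finset.sum_congr rfl fun r _ => ?_
    rw [← Algebra.commutes, ← Algebra.smul_def]
  have h2 : siteOp ρ ℓ (Matrix.single j i (1:ℂ) * X)
      = ∑ r : Fin N, algebraMap ℂ _ (X i r) * siteOp ρ ℓ (Matrix.single j r 1) := by
    rw [std_mul, siteOp_sum_smul]
    refine Finset.sum_congr rfl fun r _ => ?_
    rw [← Algebra.smul_def]
  rw [h1, h2]

lemma trace_diag_comm (S : Module.End ℂ (⨂[ℂ] i, V i))
    (M : Matrix (Fin N) (Fin N) (Module.End ℂ (⨂[ℂ] i, V i))) :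
    (Matrix.diagonal (fun _ : Fin N => S) * M - M * Matrix.diagonal (fun _ : Fin N => S)).trace
      = S * M.trace - M.trace * S := by
  simp only [Matrix.trace, Matrix.diag, Matrix.sub_apply, Matrix.diagonal_mul,
    Matrix.mul_diagonal, Finset.sum_sub_distrib, Finset.mul_sum, Finset.sum_mul]

lemma trace_emb_comm (A : Matrix (Fin N) (Fin N) ℂ)
    (M : Matrix (Fin N) (Fin N) (Module.End ℂ (⨂[ℂ] i, V i))) :
    (M * emb V A).trace = (emb V A * M).trace := by
  simp only [Matrix.trace, Matrix.diag, Matrix.mul_apply, emb, Matrix.map_apply,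
    Algebra.algebraMap_eq_smul_one, mul_smul_comm, smul_mul_assoc, mul_one, one_mul]
  rw [Finset.sum_comm]

lemma comm_sum {M : Type*} [Ring M] {α : Type*} (s : Finset α) (f : α → M) (S : M)
    (h : ∀ a ∈ s, S * f a - f a * S = 0) :
    S * (∑ a ∈ s, f a) - (∑ a ∈ s, f a) * S = 0 := by
  rw [Finset.mul_sum, Finset.sum_mul, ← Finset.sum_sub_distrib]
  exact Finset.sum_eq_zero h

lemma key_comm
    (hρ : ∀ ℓ (X Y : Matrix (Fin N) (Fin N) ℂ),
      ρ ℓ (X * Y - Y * X) = ρ ℓ X * ρ ℓ Y - ρ ℓ Y * ρ ℓ X)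
    (X : Matrix (Fin N) (Fin N) ℂ) (k j : Fin L) (A B : Matrix (Fin N) (Fin N) ℂ)
    (hA : X * A = A * X) (hB : X * B = B * X) :
    (∑ m : Fin L, siteOp ρ m X) * (Pm ρ k * emb V A * Pm ρ j * emb V B).trace
      - (Pm ρ k * emb V A * Pm ρ j * emb V B).trace * (∑ m : Fin L, siteOp ρ m X) = 0 := by
  set S := ∑ m : Fin L, siteOp ρ m X with hS
  set T := Pm ρ k * emb V A * Pm ρ j * emb V B with hT
  have hea : emb V X * emb V A = emb V A * emb V X := by
    rw [← emb_mul, ← emb_mul, hA]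
  have heb : emb V X * emb V B = emb V B * emb V X := by
    rw [← emb_mul, ← emb_mul, hB]
  have hp : Matrix.diagonal (fun _ : Fin N => S) * Pm ρ k
      = Pm ρ k * Matrix.diagonal (fun _ : Fin N => S)
        + (Pm ρ k * emb V X - emb V X * Pm ρ k) := by
    have := Sd_comm_Pm ρ hρ X k
    linear_combination (norm := noncomm_ring) this
  have hq : Matrix.diagonal (fun _ : Fin N => S) * Pm ρ j
      = Pm ρ j * Matrix.diagonal (fun _ : Fin N => S)
        + (Pm ρ j * emb V X - emb V X * Pm ρ j) := by
    have := Sd_comm_Pm ρ hρ X j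
    linear_combination (norm := noncomm_ring) this
  have hDT := conj_push (Matrix.diagonal (fun _ : Fin N => S)) (emb V X)
    (Pm ρ k) (emb V A) (Pm ρ j) (emb V B) hp hq (Sd_comm_emb S A) (Sd_comm_emb S B) hea heb
  have htr : S * T.trace - T.trace * S
      = (T * emb V X - emb V X * T).trace := by
    rw [← trace_diag_comm, hDT]
  rw [htr, Matrix.trace_sub, trace_emb_comm, sub_self]

end AuxTwistedGaudin

/-- If `X` lies in the fixed-point subalgebra `{X : G⁻¹XG = X}` of the order-`n` inner
automorphism (isomorphic to `gl_{N_0} ⊕ ⋯ ⊕ gl_{N_{n−1}}`), then `Σ_ℓ X^{(ℓ)}` commutes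
with every twisted Gaudin Hamiltonian `H_k^{(n)}`. -/
theorem statement7
    (hN : 1 ≤ N) (hL : 1 ≤ L)
    (hρ : ∀ ℓ (X Y : Matrix (Fin N) (Fin N) ℂ),
      ρ ℓ (X * Y - Y * X) = ρ ℓ X * ρ ℓ Y - ρ ℓ Y * ρ ℓ X)
    (n : ℕ) (hn : 1 ≤ n) (G : Matrix (Fin N) (Fin N) ℂ) (hG : G ^ n = 1)
    (z : Fin L → ℂ) (hz0 : ∀ ℓ, z ℓ ≠ 0)
    (hzz : ∀ k j : Fin L, k ≠ j → ∀ p < n, z k ≠ tau n ^ p * z j)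
    (X : Matrix (Fin N) (Fin N) ℂ) (hX : G * X = X * G)
    (k : Fin L) :
    (∑ ℓ : Fin L, siteOp ρ ℓ X) * Hin ρ z n G k -
      Hin ρ z n G k * (∑ ℓ : Fin L, siteOp ρ ℓ X) = 0 := by
  classical
  have cG : Commute X G := hX.symm
  have hGinv : G⁻¹ = G ^ (n - 1) := by
    apply Matrix.inv_eq_right_inv
    rw [← pow_succ', show n - 1 + 1 = n from by omega, hG]
  have cGi : Commute X G⁻¹ := by rw [hGinv]; exact cG.pow_right _
  set S := ∑ ℓ : Fin L, siteOp ρ ℓ X with hS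
  have hterm : ∀ (j : Fin L) (p : ℕ) (c : ℂ),
      S * (c • (Pm ρ k * emb V (G⁻¹ ^ p) * Pm ρ j * emb V (G ^ p)).trace)
        - (c • (Pm ρ k * emb V (G⁻¹ ^ p) * Pm ρ j * emb V (G ^ p)).trace) * S = 0 := by
    intro j p c
    rw [mul_smul_comm, smul_mul_assoc]
    rw [show ∀ x y : Module.End ℂ (⨂[ℂ] i, V i), c • x - c • y = c • (x - y) from
      fun x y => (smul_sub c x y).symm]
    rw [key_comm ρ hρ X k j _ _ (cGi.pow_right p) (cG.pow_right p), smul_zero]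
  rw [Hin]
  have hsplit : ∀ (a b : Module.End ℂ (⨂[ℂ] i, V i)),
      S * a - a * S = 0 → S * b - b * S = 0 → S * (a + b) - (a + b) * S = 0 := by
    intro a b h1 h2
    have h3 : S * (a + b) - (a + b) * S = (S * a - a * S) + (S * b - b * S) := by
      noncomm_ring
    rw [h3, h1, h2, add_zero]
  apply hsplit
  · refine comm_sum _ _ _ fun j _ => comm_sum _ _ _ fun p _ => hterm j p _
  · refine comm_sum _ _ _ fun p _ => hterm k p _
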